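/- For every 2-connected chordal graph G, the minimum cardinality of a longest cycle transversal of G is at most ω(G), the maximum size of a clique in G. -/

import Mathlib

open SimpleGraph

/-- A cycle of maximum length among all cycles of `G`. -/
def IsLongestCycle {V : Type} (G : SimpleGraph V) {v : V} (c : G.Walk v v) : Prop :=
  c.IsCycle ∧ ∀ (w : V) (d : G.Walk w w), d.IsCycle → d.length ≤ c.length
/-- `G` is 2-connected. -/
def TwoConnected {V : Type} [Fintype V] (G : SimpleGraph V) : Prop :=
  3 ≤ Fintype.card V ∧ ∀ v : V, ((⊤ : G.Subgraph).deleteVerts {v}).coe.Connected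
/-- A set of vertices meeting every longest cycle of `G`. -/
def IsLCTransversal {V : Type} (G : SimpleGraph V) (S : Finset V) : Prop :=
  ∀ (v : V) (c : G.Walk v v), IsLongestCycle G c → ∃ x ∈ S, x ∈ c.support
/-- `G` is chordal: every cycle of length at least 4 has a chord. -/
def IsChordal {V : Type} (G : SimpleGraph V) : Prop :=
  ∀ (v : V) (c : G.Walk v v), c.IsCycle → 4 ≤ c.length →
    ∃ u w, u ∈ c.support ∧ w ∈ c.support ∧ G.Adj u w ∧ s(u, w) ∉ c.edges

open Walk

variable {V : Type} {G : SimpleGraph V}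






/-- v is a simplicial vertex -/
def Simp (G : SimpleGraph V) (v : V) : Prop :=
  ∀ ⦃a b : V⦄, G.Adj v a → G.Adj v b → a ≠ b → G.Adj a b

/-- walk avoiding a simplicial vertex -/
lemma walk_avoid_simplicial {v : V} (hs : Simp G v) :
    ∀ (n : ℕ) {x y : V} (p : G.Walk x y), p.length ≤ n → x ≠ v → y ≠ v →
    ∃ q : G.Walk x y, (∀ z ∈ q.support, z ∈ p.support) ∧ v ∉ q.support := by
  intro n
  induction n with
  | zero =>
    intro x y p hl hx hy
    cases p with
    | nil => exact ⟨.nil, by simp, by simpa using fun hh => hx hh.symm⟩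
    | cons h q => simp at hl
  | succ n ih =>
    intro x y p hl hx hy
    cases p with
    | nil => exact ⟨.nil, by simp, by simpa using fun hh => hx hh.symm⟩
    | @cons _ w _ h q =>
      by_cases hwv : w = v
      · subst hwv
        cases q with
        | nil => exact absurd rfl hy
        | @cons _ w2 _ h2 q2 =>
          have hw2 : w2 ≠ w := fun hh => G.irrefl (hh ▸ h2)
          by_cases hxw2 : x = w2
          · subst hxw2
            obtain ⟨q', hq's, hq'v⟩ := ih q2 (by simp at hl; omega) (fun hh => hw2 hh) hy
            exact ⟨q', fun z hz => by simp [hq's z hz], hq'v⟩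
          · have hadj : G.Adj x w2 := hs h.symm h2 hxw2
            obtain ⟨q', hq's, hq'v⟩ := ih q2 (by simp at hl; omega) (fun hh => hw2 hh) hy
            refine ⟨.cons hadj q', ?_, ?_⟩
            · intro z hz
              simp only [support_cons, List.mem_cons] at hz ⊢
              rcases hz with rfl | hz
              · exact .inl rfl
              · exact .inr (.inr (hq's z hz))
            · simp only [support_cons, List.mem_cons, not_or]
              exact ⟨fun hh => hx hh.symm, hq'v⟩
      · obtain ⟨q', hq's, hq'v⟩ := ih q (by simp at hl; omega) hwv hy
        refine ⟨.cons h q', ?_, ?_⟩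
        · intro z hz
          simp only [support_cons, List.mem_cons] at hz ⊢
          rcases hz with rfl | hz
          · exact .inl rfl
          · exact .inr (hq's z hz)
        · simp only [support_cons, List.mem_cons, not_or]
          exact ⟨fun hh => hx hh.symm, hq'v⟩

/-- no edge back to start on a path of length ≥ 2 -/
lemma no_closing_edge {x u : V} {p : G.Walk x u} (hp : p.IsPath) (h2 : 2 ≤ p.length)
    (he : s(u, x) ∈ p.edges) : False := by
  cases p with
  | nil => simp at h2
  | @cons _ w _ h q =>
    simp only [edges_cons, List.mem_cons] at he
    have hnd := hp.support_nodup
    simp only [support_cons, List.nodup_cons] at hnd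
    rcases he with he | he
    · rw [Sym2.eq_iff] at he
      rcases he with ⟨rfl, hw⟩ | ⟨rfl, -⟩
      · exact G.irrefl (hw ▸ h)
      · -- u = w : q : G.Walk u u closed
        cases q with
        | nil => simp at h2
        | cons h' q' =>
          have : u ∈ q'.support := end_mem_support _
          simp only [support_cons, List.nodup_cons] at hnd
          exact hnd.2.1 this
    · exact hnd.1 (snd_mem_support_of_mem_edges q he)

/-- a closed walk with nodup tail support and length ≥ 3 is a cycle -/
lemma isCycle_of_tail_nodup {u : V} {c : G.Walk u u} (h3 : 3 ≤ c.length)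
    (hnd : c.support.tail.Nodup) : c.IsCycle := by
  cases c with
  | nil => simp at h3
  | @cons _ w _ h q =>
    rw [cons_isCycle_iff]
    have hq : q.IsPath := by
      rw [isPath_def]
      simpa using hnd
    refine ⟨hq, fun he => ?_⟩
    exact no_closing_edge hq (by simp at h3; omega) he



/-- walk to the first vertex satisfying P -/
lemma firstHit {P : V → Prop} :
    ∀ {a b : V} (p : G.Walk a b), P b →
    ∃ (c : V) (q : G.Walk a c), P c ∧ (∀ z ∈ q.support, z ∈ p.support) ∧
      (∀ z ∈ q.support, z ≠ c → ¬ P z) := by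
  intro a b p hb
  induction p with
  | nil => exact ⟨_, .nil, hb, by simp, by simp⟩
  | @cons x w y h q ih =>
    by_cases hPa : P x
    · exact ⟨x, .nil, hPa, by simp, by simp⟩
    · obtain ⟨c, q', hc, hsub, hfirst⟩ := ih hb
      refine ⟨c, .cons h q', hc, ?_, ?_⟩
      · intro z hz
        simp only [support_cons, List.mem_cons] at hz ⊢
        rcases hz with rfl | hz
        · exact .inl rfl
        · exact .inr (hsub z hz)
      · intro z hz hzc
        simp only [support_cons, List.mem_cons] at hz
        rcases hz with rfl | hz
        · exact hPa
        · exact hfirst z hz hzc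

/-- trim a walk between two disjoint sets -/
lemma trimWalk {A B : Set V} (hAB : ∀ z, z ∈ A → z ∉ B) {a b : V} (p : G.Walk a b)
    (ha : a ∈ A) (hb : b ∈ B) :
    ∃ (a' b' : V) (q : G.Walk a' b'), a' ∈ A ∧ b' ∈ B ∧
      (∀ z ∈ q.support, z ∈ p.support) ∧
      (∀ z ∈ q.support, z ≠ a' → z ∉ A) ∧ (∀ z ∈ q.support, z ≠ b' → z ∉ B) := by
  classical
  obtain ⟨a', q1, ha', hsub1, hfirst1⟩ := firstHit (P := fun z => z ∈ A) p.reverse (by simpa)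
  -- q1 : Walk b a', a' is first-in-A from b side; reverse: a' → b, only a' in A
  obtain ⟨b', q2, hb', hsub2, hfirst2⟩ := firstHit (P := fun z => z ∈ B) q1.reverse (by simpa)
  refine ⟨a', b', q2, ha', hb', ?_, ?_, ?_⟩
  · intro z hz
    have := hsub2 z hz
    rw [support_reverse, List.mem_reverse] at this
    have := hsub1 z this
    rwa [support_reverse, List.mem_reverse] at this
  · intro z hz hza
    have hz1 : z ∈ q1.support := by
      have := hsub2 z hz; rwa [support_reverse, List.mem_reverse] at this
    exact hfirst1 z hz1 hza
  · exact fun z hz hzb => hfirst2 z hz hzb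

/-- membership in rotate support -/
lemma mem_support_rotate [DecidableEq V] {u w z : V} (c : G.Walk u u) (h : w ∈ c.support) :
    z ∈ (c.rotate _ h).support ↔ z ∈ c.support := by
  rw [← mem_verts_toSubgraph, ← mem_verts_toSubgraph, toSubgraph_rotate]

lemma cycle_arcs [DecidableEq V] {u w : V} {c : G.Walk u u} (hc : c.IsCycle)
    (h : w ∈ c.support) (hw : w ≠ u) :
    (c.takeUntil w h).IsPath ∧ (c.dropUntil w h).IsPath ∧
      (c.takeUntil w h).length + (c.dropUntil w h).length = c.length := by
  set t := c.takeUntil w h with ht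
  set d := c.dropUntil w h with hd
  have hspec : t.append d = c := take_spec c h
  have hlen : t.length + d.length = c.length := by
    rw [← hspec, length_append]
  have hsupp : c.support = t.support ++ d.support.tail := by
    rw [← hspec, support_append]
  have htail : c.support.tail = t.support.tail ++ d.support.tail := by
    rw [hsupp, List.tail_append_of_ne_nil (support_ne_nil t)]
  have hnd := hc.2
  rw [htail, List.nodup_append] at hnd
  obtain ⟨hnd1, hnd2, hdisj⟩ := hnd
  have hu_in_d : u ∈ d.support.tail := by
    have : u ∈ d.support := end_mem_support _
    rw [support_eq_cons d] at this
    rcases List.mem_cons.mp this with h' | h'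
    · exact absurd h'.symm hw
    · exact h'
  have hw_in_t : w ∈ t.support.tail := by
    have : w ∈ t.support := end_mem_support _
    rw [support_eq_cons t] at this
    rcases List.mem_cons.mp this with h' | h'
    · exact absurd h' hw
    · exact h'
  refine ⟨?_, ?_, hlen⟩
  · rw [isPath_def, support_eq_cons t, List.nodup_cons]
    exact ⟨fun hh => (hdisj _ hh _ hu_in_d rfl), hnd1⟩
  · rw [isPath_def, support_eq_cons d, List.nodup_cons]
    exact ⟨fun hh => (hdisj _ hw_in_t _ hh rfl), hnd2⟩

lemma exists_arc [DecidableEq V] {u w : V} {c : G.Walk u u} (hc : c.IsCycle)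
    (h : w ∈ c.support) (hw : w ≠ u) :
    ∃ q : G.Walk u w, q.IsPath ∧ c.length ≤ 2 * q.length ∧
      ∀ z ∈ q.support, z ∈ c.support := by
  obtain ⟨hpt, hpd, hlen⟩ := cycle_arcs hc h hw
  by_cases hcmp : (c.dropUntil w h).length ≤ (c.takeUntil w h).length
  · exact ⟨c.takeUntil w h, hpt, by omega, fun z hz => support_takeUntil_subset _ _ hz⟩
  · refine ⟨(c.dropUntil w h).reverse, hpd.reverse, by rw [length_reverse]; omega,
      fun z hz => ?_⟩
    rw [support_reverse, List.mem_reverse] at hz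
    exact support_dropUntil_subset _ _ hz

lemma surgery {u u' : V} {c : G.Walk u u} {c' : G.Walk u' u'}
    (hc : c.IsCycle) (hc' : c'.IsCycle)
    (hmax : ∀ (w : V) (d : G.Walk w w), d.IsCycle → d.length ≤ c.length)
    (hlen : c.length ≤ c'.length)
    (hdisjC : ∀ z, z ∈ c.support → z ∉ c'.support)
    {a1 b1 a2 b2 : V} (p1 : G.Walk a1 b1) (p2 : G.Walk a2 b2)
    (ha1 : a1 ∈ c.support) (ha2 : a2 ∈ c.support)
    (hb1 : b1 ∈ c'.support) (hb2 : b2 ∈ c'.support)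
    (hp1 : p1.IsPath) (hp2 : p2.IsPath)
    (hd12 : ∀ z, z ∈ p1.support → z ∉ p2.support)
    (ht1A : ∀ z ∈ p1.support, z ≠ a1 → z ∉ c.support)
    (ht1B : ∀ z ∈ p1.support, z ≠ b1 → z ∉ c'.support)
    (ht2A : ∀ z ∈ p2.support, z ≠ a2 → z ∉ c.support)
    (ht2B : ∀ z ∈ p2.support, z ≠ b2 → z ∉ c'.support) : False := by
  classical
  have ha12 : a1 ≠ a2 := fun hh =>
    hd12 a1 (start_mem_support _) (by rw [hh]; exact start_mem_support _)
  have hb12 : b1 ≠ b2 := fun hh =>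
    hd12 b1 (end_mem_support _) (by rw [hh]; exact end_mem_support _)
  -- arcs
  set cc := c.rotate _ ha1 with hcc
  have hcc_cy : cc.IsCycle := hc.rotate ha1
  have hcc_supp : ∀ z, z ∈ cc.support ↔ z ∈ c.support := fun z => mem_support_rotate c ha1
  have ha2cc : a2 ∈ cc.support := (hcc_supp a2).mpr ha2
  obtain ⟨fA, hfAp, hfAlen, hfAsub⟩ := exists_arc hcc_cy ha2cc (Ne.symm ha12)
  have hfAsub' : ∀ z ∈ fA.support, z ∈ c.support := fun z hz => (hcc_supp z).mp (hfAsub z hz)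
  set cc' := c'.rotate _ hb2 with hcc'
  have hcc'_cy : cc'.IsCycle := hc'.rotate hb2
  have hcc'_supp : ∀ z, z ∈ cc'.support ↔ z ∈ c'.support := fun z => mem_support_rotate c' hb2
  have hb1cc : b1 ∈ cc'.support := (hcc'_supp b1).mpr hb1
  obtain ⟨fB, hfBp, hfBlen, hfBsub⟩ := exists_arc hcc'_cy hb1cc hb12
  have hfBsub' : ∀ z ∈ fB.support, z ∈ c'.support := fun z hz => (hcc'_supp z).mp (hfBsub z hz)
  -- lengths of connecting paths
  have hp1len : 1 ≤ p1.length := by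
    cases p1 with
    | nil => exact absurd hb1 (hdisjC _ ha1)
    | cons h q => simp
  have hp2len : 1 ≤ p2.length := by
    cases p2 with
    | nil => exact absurd hb2 (hdisjC _ ha2)
    | cons h q => simp
  -- the big cycle
  set D : G.Walk a1 a1 := fA.append (p2.append (fB.append p1.reverse)) with hD
  have hDlen : D.length = fA.length + (p2.length + (fB.length + p1.length)) := by
    rw [hD, length_append, length_append, length_append, length_reverse]
  have hL3 := hc.three_le_length
  have hDbig : c.length + 1 ≤ D.length := by
    have h1 : cc.length = c.length := by
      rw [hcc]
      unfold Walk.rotate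
      rw [length_append, Nat.add_comm, ← length_append, take_spec]
    have h2 : cc'.length = c'.length := by
      rw [hcc']
      unfold Walk.rotate
      rw [length_append, Nat.add_comm, ← length_append, take_spec]
    omega
  -- D is a cycle
  have hDtail : D.support.tail =
      fA.support.tail ++ (p2.support.tail ++ (fB.support.tail ++ p1.reverse.support.tail)) := by
    rw [hD, support_append, support_append, support_append,
      List.tail_append_of_ne_nil (support_ne_nil fA),
      List.tail_append_of_ne_nil (support_ne_nil p2),
      List.tail_append_of_ne_nil (support_ne_nil fB)]
  -- head-not-in-tail facts
  have hhead : ∀ {x y : V} (q : G.Walk x y), q.IsPath → x ∉ q.support.tail := by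
    intro x y q hq
    have := hq.support_nodup
    rw [support_eq_cons q, List.nodup_cons] at this
    exact this.1
  have ha1fA : a1 ∉ fA.support.tail := hhead fA hfAp
  have ha2p2 : a2 ∉ p2.support.tail := hhead p2 hp2
  have hb2fB : b2 ∉ fB.support.tail := hhead fB hfBp
  have hb1p1r : b1 ∉ p1.reverse.support.tail := hhead p1.reverse hp1.reverse
  have htailsub : ∀ {x y : V} (q : G.Walk x y), ∀ z ∈ q.support.tail, z ∈ q.support := by
    intro x y q z hz
    rw [support_eq_cons q]
    exact List.mem_cons.mpr (.inr hz)
  have hp1rsub : ∀ z ∈ p1.reverse.support.tail, z ∈ p1.support := by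
    intro z hz
    have := htailsub p1.reverse z hz
    rwa [support_reverse, List.mem_reverse] at this
  have hDnd : D.support.tail.Nodup := by
    rw [hDtail]
    rw [List.nodup_append, List.nodup_append, List.nodup_append]
    refine ⟨(hfAp.support_nodup).sublist (List.tail_sublist _),
      ⟨(hp2.support_nodup).sublist (List.tail_sublist _),
        ⟨(hfBp.support_nodup).sublist (List.tail_sublist _),
          (hp1.reverse.support_nodup).sublist (List.tail_sublist _), ?_⟩, ?_⟩, ?_⟩
    · -- fB.tail vs p1rev.tail
      intro z hz3 z0 hz4 hzz0
      subst hzz0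
      have hzB : z ∈ c'.support := hfBsub' z (htailsub fB z hz3)
      have hz1 : z ∈ p1.support := hp1rsub z hz4
      by_cases hzb1 : z = b1
      · exact hb1p1r (hzb1 ▸ hz4)
      · exact ht1B z hz1 hzb1 hzB
    · -- p2.tail vs (fB.tail ++ p1rev.tail)
      intro z hz2 z0 hz34 hzz0
      subst hzz0
      have hz2' : z ∈ p2.support := htailsub p2 z hz2
      rcases List.mem_append.mp hz34 with hz3 | hz4
      · have hzB : z ∈ c'.support := hfBsub' z (htailsub fB z hz3)
        by_cases hzb2 : z = b2
        · exact hb2fB (hzb2 ▸ hz3)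
        · exact ht2B z hz2' hzb2 hzB
      · exact hd12 z (hp1rsub z hz4) hz2'
    · -- fA.tail vs rest
      intro z hz1 z0 hzrest hzz0
      subst hzz0
      have hzA : z ∈ c.support := hfAsub' z (htailsub fA z hz1)
      rcases List.mem_append.mp hzrest with hz2 | hz34
      · have hz2' : z ∈ p2.support := htailsub p2 z hz2
        by_cases hza2 : z = a2
        · -- a2 is the END of fA, so a2 can be in fA.tail! conflict?
          subst hza2
          exact ha2p2 hz2
        · exact ht2A z hz2' hza2 hzA
      · rcases List.mem_append.mp hz34 with hz3 | hz4
        · exact hdisjC z hzA (hfBsub' z (htailsub fB z hz3))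
        · have hz1' : z ∈ p1.support := hp1rsub z hz4
          by_cases hza1 : z = a1
          · exact ha1fA (hza1 ▸ hz1)
          · exact ht1A z hz1' hza1 hzA
  have hDcy : D.IsCycle := isCycle_of_tail_nodup (by omega) hDnd
  have := hmax a1 D hDcy
  omega




/-- vertices reachable from A by walks avoiding z -/
def Side (G : SimpleGraph V) (A : Set V) (z : V) : Set V :=
  {w | ∃ a ∈ A, ∃ p : G.Walk a w, z ∉ p.support}

lemma z_not_mem_side {A : Set V} {z : V} : z ∉ Side G A z := by
  rintro ⟨a, ha, p, hp⟩
  exact hp (end_mem_support p)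

lemma mem_side_of_mem {A : Set V} {z a : V} (ha : a ∈ A) (haz : a ≠ z) : a ∈ Side G A z :=
  ⟨a, ha, .nil, by simpa using fun h => haz h.symm⟩

lemma side_closed {A : Set V} {z w w' : V} (hw : w ∈ Side G A z) (hadj : G.Adj w w')
    (hne : w' ≠ z) : w' ∈ Side G A z := by
  obtain ⟨a, ha, p, hp⟩ := hw
  refine ⟨a, ha, p.append (.cons hadj .nil), ?_⟩
  rw [support_append]
  simp only [List.mem_append, not_or]
  exact ⟨hp, by simpa using fun h => hne h.symm⟩

lemma side_compose {A B : Set V} {z w : V} (hwa : w ∈ Side G A z) (hwb : w ∈ Side G B z) :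
    ∃ (a b : V) (p : G.Walk a b), a ∈ A ∧ b ∈ B ∧ z ∉ p.support := by
  obtain ⟨a, ha, p, hp⟩ := hwa
  obtain ⟨b, hb, q, hq⟩ := hwb
  refine ⟨a, b, p.append q.reverse, ha, hb, ?_⟩
  rw [support_append]
  simp only [List.mem_append, not_or]
  constructor
  · exact hp
  · intro hz
    have := List.Sublist.mem hz (List.tail_sublist _)
    rw [support_reverse, List.mem_reverse] at this
    exact hq this

/-- walk from A using edge e=s(x,y) while avoiding z yields a G-e walk from A to x or y -/
lemma reach_endpoint {x y z : V} :
    ∀ {a b : V} (p : G.Walk a b), z ∉ p.support → s(x, y) ∈ p.edges →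
      ∃ c, (c = x ∨ c = y) ∧ ∃ q : (G.deleteEdges {s(x, y)}).Walk a c, z ∉ q.support := by
  intro a b p
  induction p with
  | nil => simp
  | @cons a w b h q ih =>
    intro hz he
    by_cases hax : a = x
    · exact ⟨a, .inl hax, .nil, by simpa using fun hh => hz (by simp [hh])⟩
    by_cases hay : a = y
    · exact ⟨a, .inr hay, .nil, by simpa using fun hh => hz (by simp [hh])⟩
    · have hz' : z ∉ q.support := fun hh => hz (by simp [hh])
      have hfirst : s(a, w) ≠ s(x, y) := by
        intro hh
        rw [Sym2.eq_iff] at hh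
        rcases hh with ⟨h1, -⟩ | ⟨h1, -⟩
        · exact hax h1
        · exact hay h1
      have he' : s(x, y) ∈ q.edges := by
        rw [edges_cons, List.mem_cons] at he
        rcases he with hh | hh
        · exact absurd hh.symm hfirst
        · exact hh
      obtain ⟨c, hc, q', hq'⟩ := ih hz' he'
      refine ⟨c, hc, .cons (by rw [deleteEdges_adj]; exact ⟨h, by simpa using hfirst⟩) q', ?_⟩
      simp only [support_cons, List.mem_cons, not_or]
      exact ⟨fun hh => hz (by simp [hh.symm]), hq'⟩

/-- in an edgeless graph every walk is trivial -/
lemma walk_eq_nil_of_no_edges (hE : G.edgeSet = ∅) {a b : V} (p : G.Walk a b) :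
    a = b ∧ p.support = [a] := by
  cases p with
  | nil => simp
  | cons h q => exact absurd (G.mem_edgeSet.mpr h) (by simp [hE])

set_option maxHeartbeats 2000000 in
lemma menger_half [Fintype V] {n : ℕ}
    (IH : ∀ (G' : SimpleGraph V) (A' B' : Set V), G'.edgeSet.ncard ≤ n →
      (∀ z' : V, ∃ (a b : V), a ∈ A' ∧ b ∈ B' ∧ ∃ p : G'.Walk a b, z' ∉ p.support) →
      ∃ (a1 b1 a2 b2 : V), a1 ∈ A' ∧ b1 ∈ B' ∧ a2 ∈ A' ∧ b2 ∈ B' ∧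
        ∃ (p1 : G'.Walk a1 b1) (p2 : G'.Walk a2 b2), ∀ w ∈ p1.support, w ∉ p2.support)
    {A B : Set V} {x y z : V}
    (hadj : G.Adj x y)
    (hcard : G.edgeSet.ncard ≤ n + 1)
    (hyp : ∀ z' : V, ∃ (a b : V), a ∈ A ∧ b ∈ B ∧ ∃ p : G.Walk a b, z' ∉ p.support)
    (hcrit : ∀ (a b : V), a ∈ A → b ∈ B →
      ∀ (p : (G.deleteEdges {s(x, y)}).Walk a b), z ∈ p.support)
    (hzx : z ≠ x) (hzy : z ≠ y)
    (hx : x ∈ Side (G.deleteEdges {s(x, y)}) A z)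
    (hy : y ∈ Side (G.deleteEdges {s(x, y)}) B z) :
    ∃ (a1 a2 : V) (q1 : G.Walk a1 x) (q2 : G.Walk a2 z),
      a1 ∈ A ∧ a2 ∈ A ∧
      (∀ w ∈ q1.support, w ∈ Side (G.deleteEdges {s(x, y)}) A z) ∧
      (∀ w ∈ q2.support, w ∈ Side (G.deleteEdges {s(x, y)}) A z ∨ w = z) ∧
      (∀ w ∈ q1.support, w ∉ q2.support) := by
  classical
  set e := s(x, y) with he_def
  set G' := G.deleteEdges {e} with hG'_def
  set Xa := Side G' A z with hXa_def
  set Xb := Side G' B z with hXb_def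
  have hxy : x ≠ y := hadj.ne
  have hXab : ∀ w, w ∈ Xa → w ∉ Xb := by
    intro w hwa hwb
    obtain ⟨a, b, p, ha, hb, hz⟩ := side_compose hwa hwb
    exact hz (hcrit a b ha hb p)
  have hzXa : z ∉ Xa := z_not_mem_side
  have hedge_z : ∀ w : V, s(w, z) ≠ e := by
    intro w hh
    rw [he_def, Sym2.eq_iff] at hh
    rcases hh with ⟨-, h2⟩ | ⟨-, h2⟩
    · exact hzy h2
    · exact hzx h2
  have hedge_x : ∀ a, a ∈ Xa → s(a, x) ≠ e := by
    intro a ha hh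
    rw [he_def, Sym2.eq_iff] at hh
    rcases hh with ⟨-, h2⟩ | ⟨h1, -⟩
    · exact hxy h2
    · exact hXab a ha (h1 ▸ hy)
  -- the graph on the A-side
  set Ga : SimpleGraph V := {
    Adj := fun u w => G.Adj u w ∧ s(u, w) ≠ e ∧ (u ∈ Xa ∨ u = z) ∧ (w ∈ Xa ∨ w = z)
    symm := by
      constructor
      rintro u w ⟨h1, h2, h3, h4⟩
      exact ⟨h1.symm, by rwa [Sym2.eq_swap], h4, h3⟩
    loopless := ⟨fun u h => G.irrefl h.1⟩ } with hGa_def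
  have hGa_le : ∀ u w, Ga.Adj u w → G.Adj u w := fun u w h => h.1
  have hGa_edges : Ga.edgeSet ⊆ G.edgeSet := by
    intro e' he'
    induction e' using Sym2.inductionOn with
    | hf u w => exact G.mem_edgeSet.mpr (hGa_le u w (Ga.mem_edgeSet.mp he'))
  have he_mem : e ∈ G.edgeSet := G.mem_edgeSet.mpr hadj
  have he_not : e ∉ Ga.edgeSet := by
    rw [he_def, Ga.mem_edgeSet]
    rintro ⟨-, h2, -⟩
    exact h2 rfl
  have hcard' : Ga.edgeSet.ncard ≤ n := by
    have hlt : Ga.edgeSet.ncard < G.edgeSet.ncard :=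
      Set.ncard_lt_ncard ⟨hGa_edges, fun hsub => he_not (hsub he_mem)⟩ (Set.toFinite _)
    omega
  -- convert a G-walk from Xa hitting {x,z} into a Ga-walk
  have to_B1 : ∀ {a c : V} (p : G.Walk a c), a ∈ Xa → (∃ w ∈ p.support, w = x ∨ w = z) →
      ∃ c', (c' = x ∨ c' = z) ∧ ∃ q : Ga.Walk a c', ∀ w ∈ q.support, w ∈ p.support := by
    intro a c p
    induction p with
    | nil =>
      intro ha hhit
      obtain ⟨w, hw, hwxz⟩ := hhit
      simp only [support_nil, List.mem_singleton] at hw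
      subst hw
      rcases hwxz with rfl | rfl
      · exact ⟨_, .inl rfl, .nil, by simp⟩
      · exact absurd ha hzXa
    | @cons a w0 c h q ih =>
      intro ha hhit
      by_cases hax : a = x
      · subst hax
        exact ⟨a, .inl rfl, .nil, by simp⟩
      have haz : a ≠ z := fun hh => hzXa (hh ▸ ha)
      by_cases hw0 : w0 = x ∨ w0 = z
      · -- stop after one step
        have hadj' : Ga.Adj a w0 := by
          refine ⟨h, ?_, .inl ha, ?_⟩
          · rcases hw0 with rfl | rfl
            · exact hedge_x a ha
            · exact hedge_z a
          · rcases hw0 with rfl | rfl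
            · exact .inl hx
            · exact .inr rfl
        refine ⟨w0, hw0, .cons hadj' .nil, ?_⟩
        intro w hw
        simp only [support_cons, support_nil, List.mem_cons, List.mem_singleton] at hw ⊢
        rcases hw with rfl | rfl | h0
        · exact .inl rfl
        · exact .inr (start_mem_support q)
        · simp at h0
      · push_neg at hw0
        have hne : s(a, w0) ≠ e := by
          intro hh
          rw [he_def, Sym2.eq_iff] at hh
          rcases hh with ⟨h1, -⟩ | ⟨-, h2⟩
          · exact hax h1
          · exact hw0.1 h2
        have hw0Xa : w0 ∈ Xa := by
          refine side_closed ha ?_ hw0.2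
          rw [hG'_def, deleteEdges_adj]
          exact ⟨h, by simpa using hne⟩
        have hhit' : ∃ w ∈ q.support, w = x ∨ w = z := by
          obtain ⟨w, hw, hwxz⟩ := hhit
          simp only [support_cons, List.mem_cons] at hw
          rcases hw with rfl | hw
          · rcases hwxz with rfl | rfl
            · exact absurd rfl hax
            · exact absurd rfl haz
          · exact ⟨w, hw, hwxz⟩
        obtain ⟨c', hc', q', hq'⟩ := ih hw0Xa hhit'
        refine ⟨c', hc', .cons ⟨h, hne, .inl ha, .inl hw0Xa⟩ q', ?_⟩
        intro w hw
        simp only [support_cons, List.mem_cons] at hw ⊢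
        rcases hw with rfl | hw
        · exact .inl rfl
        · exact .inr (hq' w hw)
  -- the hypothesis for (Ga, A, {x,z})
  have hypGa : ∀ z' : V, ∃ (a c : V), a ∈ A ∧ c ∈ ({x, z} : Set V) ∧
      ∃ p : Ga.Walk a c, z' ∉ p.support := by
    intro z'
    obtain ⟨a, b, ha, hb, W, hz'⟩ := hyp z'
    have haW : a ∈ W.support := start_mem_support W
    by_cases haz : a = z
    · refine ⟨a, a, ha, by simp [haz], .nil, ?_⟩
      simp only [support_nil, List.mem_singleton]
      intro hh
      rw [hh] at hz'
      exact hz' haW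
    · have hhit : ∃ w ∈ W.support, w = x ∨ w = z := by
        by_cases hzW : z ∈ W.support
        · exact ⟨z, hzW, .inr rfl⟩
        by_cases heW : e ∈ W.edges
        · rw [he_def] at heW
          exact ⟨x, fst_mem_support_of_mem_edges W heW, .inl rfl⟩
        · exfalso
          have hsub : ∀ e' ∈ W.edges, e' ∈ G'.edgeSet := by
            intro e' he'
            rw [hG'_def, edgeSet_deleteEdges]
            refine ⟨W.edges_subset_edgeSet he', ?_⟩
            simp only [Set.mem_singleton_iff]
            intro hh
            rw [hh] at he'
            exact heW he'
          have := hcrit a b ha hb (W.transfer G' hsub)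
          rw [support_transfer] at this
          exact hzW this
      obtain ⟨c', hc', q, hq⟩ := to_B1 W (mem_side_of_mem ha haz) hhit
      refine ⟨a, c', ha, by simpa using hc', q, fun hh => hz' (hq z' hh)⟩
  -- apply the induction hypothesis
  obtain ⟨a1, c1, a2, c2, ha1, hc1, ha2, hc2, p1, p2, hdisj⟩ :=
    IH Ga A {x, z} hcard' hypGa
  -- supports of Ga-walks
  have hGaSupp : ∀ {a c : V} (q : Ga.Walk a c), ∀ w ∈ q.support, w ∈ Xa ∨ w = z ∨ w = c := by
    intro a c q
    induction q with
    | nil => intro w hw; simp only [support_nil, List.mem_singleton] at hw; exact .inr (.inr hw)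
    | @cons a w0 c h q ih =>
      intro w hw
      simp only [support_cons, List.mem_cons] at hw
      rcases hw with rfl | hw
      · rcases h.2.2.1 with hh | hh
        · exact .inl hh
        · exact .inr (.inl hh)
      · exact ih w hw
  have hc12 : c1 ≠ c2 := by
    intro hh
    exact hdisj c1 (end_mem_support p1) (hh ▸ end_mem_support p2)
  -- transfer to G
  have htrans : ∀ {a c : V} (q : Ga.Walk a c), ∀ e' ∈ q.edges, e' ∈ G.edgeSet :=
    fun q e' he' => hGa_edges (q.edges_subset_edgeSet he')
  simp only [Set.mem_insert_iff, Set.mem_singleton_iff] at hc1 hc2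
  have main : ∀ (c1' c2' : V), c1' = x → c2' = z → ∀ {a1' a2' : V}, a1' ∈ A → a2' ∈ A →
      ∀ (p1' : Ga.Walk a1' c1') (p2' : Ga.Walk a2' c2'),
      (∀ w ∈ p1'.support, w ∉ p2'.support) →
      ∃ (b1 b2 : V) (q1 : G.Walk b1 x) (q2 : G.Walk b2 z),
        b1 ∈ A ∧ b2 ∈ A ∧
        (∀ w ∈ q1.support, w ∈ Xa) ∧
        (∀ w ∈ q2.support, w ∈ Xa ∨ w = z) ∧
        (∀ w ∈ q1.support, w ∉ q2.support) := by
    rintro c1' c2' rfl rfl a1' a2' ha1' ha2' p1' p2' hdisj'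
    refine ⟨a1', a2', p1'.transfer G (htrans p1'), p2'.transfer G (htrans p2'),
      ha1', ha2', ?_, ?_, ?_⟩
    · intro w hw
      rw [support_transfer] at hw
      rcases hGaSupp p1' w hw with hh | hh | hh
      · exact hh
      · exfalso
        subst hh
        exact hdisj' w hw (end_mem_support p2')
      · exact hh ▸ hx
    · intro w hw
      rw [support_transfer] at hw
      rcases hGaSupp p2' w hw with hh | hh | hh
      · exact .inl hh
      · exact .inr hh
      · exact .inr hh
    · intro w hw
      rw [support_transfer] at hw ⊢
      exact hdisj' w hw
  rcases hc1 with rfl | rfl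
  · rcases hc2 with rfl | rfl
    · exact absurd rfl hc12
    · exact main c1 c2 rfl rfl ha1 ha2 p1 p2 hdisj
  · rcases hc2 with rfl | rfl
    · exact main c2 c1 rfl rfl ha2 ha1 p2 p1
        (fun w hw hw2 => hdisj w hw2 hw)
    · exact absurd rfl hc12

lemma menger_edgeless {A B : Set V} (v0 : V) (hE : G.edgeSet = ∅)
    (hyp : ∀ z' : V, ∃ (a b : V), a ∈ A ∧ b ∈ B ∧ ∃ p : G.Walk a b, z' ∉ p.support) :
    ∃ (a1 b1 a2 b2 : V), a1 ∈ A ∧ b1 ∈ B ∧ a2 ∈ A ∧ b2 ∈ B ∧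
      ∃ (p1 : G.Walk a1 b1) (p2 : G.Walk a2 b2), ∀ w ∈ p1.support, w ∉ p2.support := by
  obtain ⟨a, b, ha, hb, p, hp⟩ := hyp v0
  obtain ⟨rfl, hsupp⟩ := walk_eq_nil_of_no_edges hE p
  obtain ⟨a2, b2, ha2, hb2, p2, hp2⟩ := hyp a
  obtain ⟨rfl, hsupp2⟩ := walk_eq_nil_of_no_edges hE p2
  have hne : a2 ≠ a := by
    intro hh
    rw [hsupp2] at hp2
    simp [hh] at hp2
  exact ⟨a, a, a2, a2, ha, hb, ha2, hb2, p, p2, by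
    rw [hsupp, hsupp2]
    intro w hw
    simp only [List.mem_singleton] at hw ⊢
    rw [hw]
    exact fun hh => hne hh.symm⟩

theorem menger2 [Fintype V] (v0 : V) :
    ∀ (n : ℕ) (G : SimpleGraph V) (A B : Set V), G.edgeSet.ncard ≤ n →
      (∀ z' : V, ∃ (a b : V), a ∈ A ∧ b ∈ B ∧ ∃ p : G.Walk a b, z' ∉ p.support) →
      ∃ (a1 b1 a2 b2 : V), a1 ∈ A ∧ b1 ∈ B ∧ a2 ∈ A ∧ b2 ∈ B ∧
        ∃ (p1 : G.Walk a1 b1) (p2 : G.Walk a2 b2), ∀ w ∈ p1.support, w ∉ p2.support := by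
  intro n
  induction n with
  | zero =>
    intro G A B hcard hyp
    have hE : G.edgeSet = ∅ := by
      rw [← Set.ncard_eq_zero (Set.toFinite _)]
      omega
    exact menger_edgeless v0 hE hyp
  | succ n IH =>
    intro G A B hcard hyp
    by_cases hE : G.edgeSet = ∅
    · exact menger_edgeless v0 hE hyp
    by_cases hgood : ∃ e ∈ G.edgeSet, ∀ z' : V, ∃ (a b : V), a ∈ A ∧ b ∈ B ∧
        ∃ p : (G.deleteEdges {e}).Walk a b, z' ∉ p.support
    · obtain ⟨e, heE, hyp'⟩ := hgood
      have hcard' : (G.deleteEdges {e}).edgeSet.ncard ≤ n := by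
        have hssub : (G.deleteEdges {e}).edgeSet ⊂ G.edgeSet := by
          rw [edgeSet_deleteEdges]
          exact ⟨Set.diff_subset, fun hsub => ((hsub heE).2 rfl)⟩
        have := Set.ncard_lt_ncard hssub (Set.toFinite _)
        omega
      obtain ⟨a1, b1, a2, b2, ha1, hb1, ha2, hb2, p1, p2, hd⟩ := IH _ A B hcard' hyp'
      have htr : ∀ {u w : V} (q : (G.deleteEdges {e}).Walk u w), ∀ e' ∈ q.edges,
          e' ∈ G.edgeSet := by
        intro u w q e' he'
        have := q.edges_subset_edgeSet he'
        rw [edgeSet_deleteEdges] at this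
        exact this.1
      refine ⟨a1, b1, a2, b2, ha1, hb1, ha2, hb2, p1.transfer G (htr p1),
        p2.transfer G (htr p2), ?_⟩
      intro w hw
      rw [support_transfer] at hw ⊢
      exact hd w hw
    · push_neg at hgood
      obtain ⟨e0, he0⟩ := Set.nonempty_iff_ne_empty.mpr hE
      induction e0 using Sym2.ind with
      | _ x y =>
      have hadj : G.Adj x y := G.mem_edgeSet.mp he0
      obtain ⟨z, hcrit⟩ := hgood s(x, y) he0
      -- z is distinct from x and y
      have hzx : z ≠ x := by
        intro heq
        obtain ⟨a, b, ha, hb, W, hW⟩ := hyp x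
        have hpe : ∀ e' ∈ W.edges, e' ∈ (G.deleteEdges {s(x, y)}).edgeSet := by
          intro e' he'
          rw [edgeSet_deleteEdges]
          refine ⟨W.edges_subset_edgeSet he', ?_⟩
          simp only [Set.mem_singleton_iff]
          rintro rfl
          exact hW (fst_mem_support_of_mem_edges W he')
        have hthis := hcrit a b ha hb (W.transfer _ hpe)
        rw [support_transfer] at hthis
        rw [heq] at hthis
        exact hW hthis
      have hzy : z ≠ y := by
        intro heq
        obtain ⟨a, b, ha, hb, W, hW⟩ := hyp y
        have hpe : ∀ e' ∈ W.edges, e' ∈ (G.deleteEdges {s(x, y)}).edgeSet := by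
          intro e' he'
          rw [edgeSet_deleteEdges]
          refine ⟨W.edges_subset_edgeSet he', ?_⟩
          simp only [Set.mem_singleton_iff]
          rintro rfl
          exact hW (snd_mem_support_of_mem_edges W he')
        have hthis := hcrit a b ha hb (W.transfer _ hpe)
        rw [support_transfer] at hthis
        rw [heq] at hthis
        exact hW hthis
      -- which endpoint is on which side
      have hXab : ∀ w, w ∈ Side (G.deleteEdges {s(x, y)}) A z →
          w ∉ Side (G.deleteEdges {s(x, y)}) B z := by
        intro w hwa hwb
        obtain ⟨a, b, p, ha, hb, hz⟩ := side_compose hwa hwb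
        exact hz (hcrit a b ha hb p)
      have hclaim : (x ∈ Side (G.deleteEdges {s(x, y)}) A z ∧
          y ∈ Side (G.deleteEdges {s(x, y)}) B z) ∨
          (y ∈ Side (G.deleteEdges {s(x, y)}) A z ∧
          x ∈ Side (G.deleteEdges {s(x, y)}) B z) := by
        obtain ⟨a, b, ha, hb, W, hW⟩ := hyp z
        have heW : s(x, y) ∈ W.edges := by
          by_contra heW
          have hpe : ∀ e' ∈ W.edges, e' ∈ (G.deleteEdges {s(x, y)}).edgeSet := by
            intro e' he'
            rw [edgeSet_deleteEdges]
            refine ⟨W.edges_subset_edgeSet he', ?_⟩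
            simp only [Set.mem_singleton_iff]
            rintro rfl
            exact heW he'
          have := hcrit a b ha hb (W.transfer _ hpe)
          rw [support_transfer] at this
          exact hW this
        obtain ⟨c, hc, q, hq⟩ := reach_endpoint W hW heW
        have hcXa : c ∈ Side (G.deleteEdges {s(x, y)}) A z := ⟨a, ha, q, hq⟩
        have hWr : z ∉ W.reverse.support := by rwa [support_reverse, List.mem_reverse]
        have heWr : s(x, y) ∈ W.reverse.edges := by rwa [edges_reverse, List.mem_reverse]
        obtain ⟨c2, hc2, q2, hq2⟩ := reach_endpoint W.reverse hWr heWr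
        have hc2Xb : c2 ∈ Side (G.deleteEdges {s(x, y)}) B z := ⟨b, hb, q2, hq2⟩
        have hcc2 : c ≠ c2 := by
          rintro rfl
          exact hXab c hcXa hc2Xb
        rcases hc with rfl | rfl
        · rcases hc2 with rfl | rfl
          · exact absurd rfl hcc2
          · exact .inl ⟨hcXa, hc2Xb⟩
        · rcases hc2 with rfl | rfl
          · exact .inr ⟨hcXa, hc2Xb⟩
          · exact absurd rfl hcc2
      -- symmetric data
      have hGeq : G.deleteEdges {s(y, x)} = G.deleteEdges {s(x, y)} := by
        rw [Sym2.eq_swap]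
      have hypB : ∀ z' : V, ∃ (a b : V), a ∈ B ∧ b ∈ A ∧ ∃ p : G.Walk a b, z' ∉ p.support := by
        intro z'
        obtain ⟨a, b, ha, hb, p, hp⟩ := hyp z'
        exact ⟨b, a, hb, ha, p.reverse, by rwa [support_reverse, List.mem_reverse]⟩
      have hSideEqA : Side (G.deleteEdges {s(y, x)}) A z = Side (G.deleteEdges {s(x, y)}) A z := by
        rw [hGeq]
      have hSideEqB : Side (G.deleteEdges {s(y, x)}) B z = Side (G.deleteEdges {s(x, y)}) B z := by
        rw [hGeq]
      have hcritB : ∀ (a b : V), a ∈ B → b ∈ A →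
          ∀ (p : (G.deleteEdges {s(y, x)}).Walk a b), z ∈ p.support := by
        intro a b ha hb p
        have hpe : ∀ e' ∈ p.reverse.edges, e' ∈ (G.deleteEdges {s(x, y)}).edgeSet := by
          intro e' he'
          have := p.reverse.edges_subset_edgeSet he'
          rw [edgeSet_deleteEdges, Sym2.eq_swap] at this
          rwa [edgeSet_deleteEdges]
        have := hcrit b a hb ha (p.reverse.transfer _ hpe)
        rw [support_transfer, support_reverse, List.mem_reverse] at this
        exact this
      -- helper applying both halves and combining
      have combine : ∀ (x' y' : V), G.Adj x' y' → z ≠ x' → z ≠ y' →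
          x' ∈ Side (G.deleteEdges {s(x', y')}) A z →
          y' ∈ Side (G.deleteEdges {s(x', y')}) B z →
          (∀ (a b : V), a ∈ A → b ∈ B →
            ∀ (p : (G.deleteEdges {s(x', y')}).Walk a b), z ∈ p.support) →
          (∀ (a b : V), a ∈ B → b ∈ A →
            ∀ (p : (G.deleteEdges {s(y', x')}).Walk a b), z ∈ p.support) →
          y' ∈ Side (G.deleteEdges {s(y', x')}) B z →
          x' ∈ Side (G.deleteEdges {s(y', x')}) A z →
          ∃ (a1 b1 a2 b2 : V), a1 ∈ A ∧ b1 ∈ B ∧ a2 ∈ A ∧ b2 ∈ B ∧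
            ∃ (p1 : G.Walk a1 b1) (p2 : G.Walk a2 b2), ∀ w ∈ p1.support, w ∉ p2.support := by
        intro x' y' hadj' hzx' hzy' hx' hy' hcrit' hcritB' hy'' hx''
        obtain ⟨a1, a2, q1, q2, ha1, ha2, hq1s, hq2s, hq12⟩ :=
          menger_half IH hadj' hcard hyp hcrit' hzx' hzy' hx' hy'
        obtain ⟨b1, b2, r1, r2, hb1, hb2, hr1s, hr2s, hr12⟩ :=
          menger_half IH hadj'.symm hcard hypB hcritB' hzy' hzx' hy'' hx''
        -- disjointness of the sides
        have hABdisj : ∀ w, w ∈ Side (G.deleteEdges {s(x', y')}) A z →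
            w ∉ Side (G.deleteEdges {s(x', y')}) B z := by
          intro w hwa hwb
          obtain ⟨a, b, p, ha, hb, hz⟩ := side_compose hwa hwb
          exact hz (hcrit' a b ha hb p)
        have hSideEqA' : Side (G.deleteEdges {s(y', x')}) A z =
            Side (G.deleteEdges {s(x', y')}) A z := by rw [Sym2.eq_swap]
        have hSideEqB' : Side (G.deleteEdges {s(y', x')}) B z =
            Side (G.deleteEdges {s(x', y')}) B z := by rw [Sym2.eq_swap]
        rw [hSideEqB'] at hr1s
        rw [hSideEqB'] at hr2s
        -- build the combined walks
        refine ⟨a1, b1, a2, b2, ha1, hb1, ha2, hb2,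
          q1.append (Walk.cons hadj' r1.reverse), q2.append r2.reverse, ?_⟩
        intro w hw hw2
        -- decompose membership
        have hw' : w ∈ q1.support ∨ w ∈ r1.support := by
          rw [support_append] at hw
          rcases List.mem_append.mp hw with hh | hh
          · exact .inl hh
          · right
            simp only [support_cons, List.tail_cons] at hh
            rwa [support_reverse, List.mem_reverse] at hh
        have hw2' : w ∈ q2.support ∨ w ∈ r2.support := by
          rw [support_append] at hw2
          rcases List.mem_append.mp hw2 with hh | hh
          · exact .inl hh
          · right
            have := List.Sublist.mem hh (List.tail_sublist _)
            rwa [support_reverse, List.mem_reverse] at this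
        have hzXa : z ∉ Side (G.deleteEdges {s(x', y')}) A z := z_not_mem_side
        have hzXb : z ∉ Side (G.deleteEdges {s(x', y')}) B z := z_not_mem_side
        rcases hw' with hh1 | hh1 <;> rcases hw2' with hh2 | hh2
        · exact hq12 w hh1 hh2
        · -- w ∈ q1 (⊆ Xa) and w ∈ r2 (⊆ Xb ∪ {z})
          have hwa := hq1s w hh1
          rcases hr2s w hh2 with hwb | rfl
          · exact hABdisj w hwa hwb
          · exact hzXa hwa
        · -- w ∈ r1 (⊆ Xb) and w ∈ q2 (⊆ Xa ∪ {z})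
          have hwb := hr1s w hh1
          rcases hq2s w hh2 with hwa | rfl
          · exact hABdisj w hwa hwb
          · exact hzXb hwb
        · exact hr12 w hh1 hh2
      rcases hclaim with ⟨hx1, hy1⟩ | ⟨hy1, hx1⟩
      · refine combine x y hadj hzx hzy hx1 hy1 hcrit hcritB ?_ ?_
        · rw [hSideEqB]; exact hy1
        · rw [hSideEqA]; exact hx1
      · refine combine y x hadj.symm hzy hzx ?_ ?_ ?_ ?_ hx1 hy1
        · rw [hSideEqA]; exact hy1
        · rw [hSideEqB]; exact hx1
        · rw [hGeq]; exact hcrit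
        · rw [← hGeq]; exact hcritB

/-- vertices reachable from a by walks avoiding the finset T -/
def SideF (G : SimpleGraph V) (a : V) (T : Finset V) : Set V :=
  {w | ∃ p : G.Walk a w, ∀ z ∈ p.support, z ∉ T}

lemma mem_sideF_self {a : V} {T : Finset V} (ha : a ∉ T) : a ∈ SideF G a T :=
  ⟨.nil, by simpa using ha⟩

lemma sideF_not_mem {a w : V} {T : Finset V} (hw : w ∈ SideF G a T) : w ∉ T := by
  obtain ⟨p, hp⟩ := hw
  exact hp w (end_mem_support p)

lemma sideF_closed {a w w' : V} {T : Finset V} (hw : w ∈ SideF G a T)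
    (hadj : G.Adj w w') (hw' : w' ∉ T) : w' ∈ SideF G a T := by
  obtain ⟨p, hp⟩ := hw
  refine ⟨p.append (.cons hadj .nil), ?_⟩
  intro z hz
  rw [support_append] at hz
  rcases List.mem_append.mp hz with hh | hh
  · exact hp z hh
  · simp only [support_cons, support_nil, List.tail_cons, List.mem_singleton] at hh
    exact hh ▸ hw'

lemma sideF_support [DecidableEq V] {a w : V} {T : Finset V} (p : G.Walk a w)
    (hp : ∀ z ∈ p.support, z ∉ T) : ∀ z ∈ p.support, z ∈ SideF G a T := by
  intro z hz
  exact ⟨p.takeUntil z hz, fun z' hz' => hp z' (support_takeUntil_subset p hz hz')⟩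

lemma sideF_compose {a b x : V} {T : Finset V} (hxa : x ∈ SideF G a T)
    (hxb : x ∈ SideF G b T) : ∃ p : G.Walk a b, ∀ z ∈ p.support, z ∉ T := by
  obtain ⟨p, hp⟩ := hxa
  obtain ⟨q, hq⟩ := hxb
  refine ⟨p.append q.reverse, ?_⟩
  intro z hz
  rw [support_append] at hz
  rcases List.mem_append.mp hz with hh | hh
  · exact hp z hh
  · have := List.Sublist.mem hh (List.tail_sublist _)
    rw [support_reverse, List.mem_reverse] at this
    exact hq z this

lemma edge_of_length_one {u w : V} {p : G.Walk u w} (h : p.length = 1) :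
    s(u, w) ∈ p.edges := by
  cases p with
  | nil => simp at h
  | @cons _ x _ h' q =>
    have : q.length = 0 := by simpa using h
    have hx : x = w := eq_of_length_eq_zero this
    subst hx
    simp

/-- a non-cycle-edge chord of a walk yields a strictly shorter walk within the same support -/
lemma exists_shortcut [DecidableEq V] :
    ∀ {s t u w : V} (p : G.Walk s t), u ∈ p.support → w ∈ p.support → u ≠ w →
      G.Adj u w → s(u, w) ∉ p.edges →
      ∃ q : G.Walk s t, q.length + 1 ≤ p.length ∧ ∀ z ∈ q.support, z ∈ p.support := by
  intro s t u w p
  induction p with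
  | nil =>
    intro hu hw huw _ _
    simp only [support_nil, List.mem_singleton] at hu hw
    exact absurd (hu.trans hw.symm) huw
  | @cons s v2 t h rest ih =>
    intro hu hw huw hadj hec
    by_cases hsu : s = u
    · subst hsu
      have hw' : w ∈ (Walk.cons h rest).support := hw
      have hdrop := (Walk.cons h rest).dropUntil w hw'
      refine ⟨.cons hadj ((Walk.cons h rest).dropUntil w hw'), ?_, ?_⟩
      · have hspec : ((Walk.cons h rest).takeUntil w hw').length +
            ((Walk.cons h rest).dropUntil w hw').length = (Walk.cons h rest).length := by
          rw [← length_append, take_spec]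
        rw [length_cons] at hspec
        have h1 : 1 ≤ ((Walk.cons h rest).takeUntil w hw').length := by
          rcases Nat.eq_zero_or_pos ((Walk.cons h rest).takeUntil w hw').length with h0 | h0
          · exact absurd (eq_of_length_eq_zero h0) huw
          · exact h0
        have h2 : ((Walk.cons h rest).takeUntil w hw').length ≠ 1 := by
          intro h1'
          exact hec (edges_takeUntil_subset _ hw' (edge_of_length_one h1'))
        simp only [length_cons]
        omega
      · intro z hz
        simp only [support_cons, List.mem_cons] at hz ⊢
        rcases hz with rfl | hz
        · exact .inl rfl
        · have := support_dropUntil_subset _ hw' hz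
          simpa using this
    by_cases hsw : s = w
    · subst hsw
      have hu' : u ∈ (Walk.cons h rest).support := hu
      refine ⟨.cons hadj.symm ((Walk.cons h rest).dropUntil u hu'), ?_, ?_⟩
      · have hspec : ((Walk.cons h rest).takeUntil u hu').length +
            ((Walk.cons h rest).dropUntil u hu').length = (Walk.cons h rest).length := by
          rw [← length_append, take_spec]
        rw [length_cons] at hspec
        have h1 : 1 ≤ ((Walk.cons h rest).takeUntil u hu').length := by
          rcases Nat.eq_zero_or_pos ((Walk.cons h rest).takeUntil u hu').length with h0 | h0
          · exact absurd (eq_of_length_eq_zero h0) (fun hh => huw hh.symm)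
          · exact h0
        have h2 : ((Walk.cons h rest).takeUntil u hu').length ≠ 1 := by
          intro h1'
          have := edges_takeUntil_subset _ hu' (edge_of_length_one h1')
          rw [Sym2.eq_swap] at this
          exact hec this
        simp only [length_cons]
        omega
      · intro z hz
        simp only [support_cons, List.mem_cons] at hz ⊢
        rcases hz with rfl | hz
        · exact .inl rfl
        · have := support_dropUntil_subset _ hu' hz
          simpa using this
    · -- s is neither u nor w, recurse
      have hu' : u ∈ rest.support := by
        simp only [support_cons, List.mem_cons] at hu
        rcases hu with rfl | hu
        · exact absurd rfl hsu
        · exact hu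
      have hw' : w ∈ rest.support := by
        simp only [support_cons, List.mem_cons] at hw
        rcases hw with rfl | hw
        · exact absurd rfl hsw
        · exact hw
      have hec' : s(u, w) ∉ rest.edges := fun hh => hec (by simp [hh])
      obtain ⟨q, hql, hqs⟩ := ih hu' hw' huw hadj hec'
      refine ⟨.cons h q, by simpa using hql, ?_⟩
      intro z hz
      simp only [support_cons, List.mem_cons] at hz ⊢
      rcases hz with rfl | hz
      · exact .inl rfl
      · exact .inr (hqs z hz)

theorem clique_sep [Fintype V] (hch : IsChordal G) {a b : V} (hab : a ≠ b)
    (hnadj : ¬G.Adj a b) :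
    ∃ T : Finset V, a ∉ T ∧ b ∉ T ∧
      (∀ p : G.Walk a b, ∃ z ∈ p.support, z ∈ T) ∧
      (∀ s ∈ T, ∀ t ∈ T, s ≠ t → G.Adj s t) ∧
      (∀ s ∈ T, ∃ x, G.Adj x s ∧ x ∈ SideF G a T) ∧
      (∀ s ∈ T, ∃ x, G.Adj x s ∧ x ∈ SideF G b T) := by
  classical
  have hS0 : a ∉ (Finset.univ \ {a, b}) ∧ b ∉ (Finset.univ \ {a, b}) ∧
      ∀ p : G.Walk a b, ∃ z ∈ p.support, z ∈ (Finset.univ \ {a, b}) := by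
    refine ⟨by simp, by simp, ?_⟩
    intro p
    cases p with
    | nil => exact absurd rfl hab
    | @cons _ w _ h q =>
      have hwa : w ≠ a := fun hh => G.irrefl (hh ▸ h)
      have hwb : w ≠ b := by
        rintro rfl
        exact hnadj h
      exact ⟨w, by simp, by simp [hwa, hwb]⟩
  set NS : Set ℕ := {n | ∃ T : Finset V,
    (a ∉ T ∧ b ∉ T ∧ ∀ p : G.Walk a b, ∃ z ∈ p.support, z ∈ T) ∧ T.card = n} with hNS
  have hNSne : NS.Nonempty := ⟨_, _, hS0, rfl⟩
  obtain ⟨T, hT, hTcard⟩ := Nat.sInf_mem hNSne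
  obtain ⟨haT, hbT, hsepT⟩ := hT
  -- minimality
  have hmin : ∀ s ∈ T, ∃ p : G.Walk a b, ∀ z ∈ p.support, z ∈ T → z = s := by
    intro s hs
    have hcard' : (T.erase s).card < T.card := Finset.card_erase_lt_of_mem hs
    have hnot : ¬ (∀ p : G.Walk a b, ∃ z ∈ p.support, z ∈ T.erase s) := by
      intro hSp
      have : T.card ≤ (T.erase s).card := by
        rw [hTcard]
        exact Nat.sInf_le ⟨_, ⟨fun hh => haT (Finset.mem_of_mem_erase hh),
          fun hh => hbT (Finset.mem_of_mem_erase hh), hSp⟩, rfl⟩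
      omega
    push_neg at hnot
    obtain ⟨p, hp⟩ := hnot
    refine ⟨p, ?_⟩
    intro z hz hzT
    by_contra hzs
    exact hp z hz (Finset.mem_erase.mpr ⟨hzs, hzT⟩)
  -- neighbours of separator vertices on each side
  have haSide : a ∈ SideF G a T := mem_sideF_self haT
  have hbSide : b ∈ SideF G b T := mem_sideF_self hbT
  have aux : ∀ (s : V), s ∈ T → ∀ (r : V), r ∈ SideF G a T →
      ∀ {c : V} (p : G.Walk r c), (∀ z ∈ p.support, z ∈ T → z = s) → s ∈ p.support →
      ∃ x, G.Adj x s ∧ x ∈ SideF G a T := by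
    intro s hsT r hr c p
    induction p with
    | nil =>
      intro _ hsp
      simp only [support_nil, List.mem_singleton] at hsp
      subst hsp
      exact absurd hsT (sideF_not_mem hr)
    | @cons r w2 c h q ih =>
      intro hcond hsp
      by_cases hw2 : w2 = s
      · exact ⟨r, hw2 ▸ h, hr⟩
      · have hw2T : w2 ∉ T := fun hh => hw2 (hcond w2 (by simp) hh)
        have hw2S : w2 ∈ SideF G a T := sideF_closed hr h hw2T
        have hrs : r ≠ s := fun hh => (sideF_not_mem hr) (hh ▸ hsT)
        have hsq : s ∈ q.support := by
          simp only [support_cons, List.mem_cons] at hsp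
          rcases hsp with hh | hh
          · exact absurd hh.symm hrs
          · exact hh
        exact ih hw2S (fun z hz hzT => hcond z (by simp [hz]) hzT) hsq
  have auxB : ∀ (s : V), s ∈ T → ∀ (r : V), r ∈ SideF G b T →
      ∀ {c : V} (p : G.Walk r c), (∀ z ∈ p.support, z ∈ T → z = s) → s ∈ p.support →
      ∃ x, G.Adj x s ∧ x ∈ SideF G b T := by
    intro s hsT r hr c p
    induction p with
    | nil =>
      intro _ hsp
      simp only [support_nil, List.mem_singleton] at hsp
      subst hsp
      exact absurd hsT (sideF_not_mem hr)
    | @cons r w2 c h q ih =>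
      intro hcond hsp
      by_cases hw2 : w2 = s
      · exact ⟨r, hw2 ▸ h, hr⟩
      · have hw2T : w2 ∉ T := fun hh => hw2 (hcond w2 (by simp) hh)
        have hw2S : w2 ∈ SideF G b T := sideF_closed hr h hw2T
        have hrs : r ≠ s := fun hh => (sideF_not_mem hr) (hh ▸ hsT)
        have hsq : s ∈ q.support := by
          simp only [support_cons, List.mem_cons] at hsp
          rcases hsp with hh | hh
          · exact absurd hh.symm hrs
          · exact hh
        exact ih hw2S (fun z hz hzT => hcond z (by simp [hz]) hzT) hsq
  have nbrA : ∀ s ∈ T, ∃ x, G.Adj x s ∧ x ∈ SideF G a T := by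
    intro s hs
    obtain ⟨p, hp⟩ := hmin s hs
    obtain ⟨z, hz, hzT⟩ := hsepT p
    have hsp : s ∈ p.support := (hp z hz hzT) ▸ hz
    exact aux s hs a haSide p hp hsp
  have nbrB : ∀ s ∈ T, ∃ x, G.Adj x s ∧ x ∈ SideF G b T := by
    intro s hs
    obtain ⟨p, hp⟩ := hmin s hs
    obtain ⟨z, hz, hzT⟩ := hsepT p
    have hsp : s ∈ p.reverse.support := by
      rw [support_reverse, List.mem_reverse]
      exact (hp z hz hzT) ▸ hz
    exact auxB s hs b hbSide p.reverse
      (fun z hz hzT => hp z (by rwa [support_reverse, List.mem_reverse] at hz) hzT) hsp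
  -- the two sides are disjoint and non-adjacent
  have hABdisj : ∀ x, x ∈ SideF G a T → x ∉ SideF G b T := by
    intro x hxa hxb
    obtain ⟨p, hp⟩ := sideF_compose hxa hxb
    obtain ⟨z, hz, hzT⟩ := hsepT p
    exact hp z hz hzT
  have hABnoedge : ∀ x y, x ∈ SideF G a T → y ∈ SideF G b T → ¬G.Adj x y := by
    intro x y hx hy hadj
    exact hABdisj y (sideF_closed hx hadj (sideF_not_mem hy)) hy
  -- T is a clique
  have hclique : ∀ s ∈ T, ∀ t ∈ T, s ≠ t → G.Adj s t := by
    intro s hs t ht hst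
    by_contra hnadjst
    obtain ⟨xs, hxs, hxsA⟩ := nbrA s hs
    obtain ⟨xt, hxt, hxtA⟩ := nbrA t ht
    obtain ⟨ys, hys, hysB⟩ := nbrB s hs
    obtain ⟨yt, hyt, hytB⟩ := nbrB t ht
    -- condition for being a valid connecting walk on the a-side
    have hWA : ∃ p : G.Walk s t, (∀ z ∈ p.support, z = s ∨ z = t ∨ z ∈ SideF G a T) := by
      obtain ⟨pa, hpa⟩ := hxsA
      obtain ⟨pa', hpa'⟩ := hxtA
      refine ⟨.cons hxs.symm ((pa.reverse.append pa').append (.cons hxt .nil)), ?_⟩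
      intro z hz
      simp only [support_cons, List.mem_cons] at hz
      rcases hz with rfl | hz
      · exact .inl rfl
      rw [support_append, support_append] at hz
      rcases List.mem_append.mp hz with hz' | hz'
      · rcases List.mem_append.mp hz' with hz'' | hz''
        · right; right
          rw [support_reverse, List.mem_reverse] at hz''
          exact sideF_support pa hpa z hz''
        · right; right
          exact sideF_support pa' hpa' z (List.Sublist.mem hz'' (List.tail_sublist _))
      · right; left
        simp only [support_cons, support_nil, List.tail_cons, List.mem_singleton] at hz'
        exact hz'
    have hWB : ∃ p : G.Walk s t, (∀ z ∈ p.support, z = s ∨ z = t ∨ z ∈ SideF G b T) := by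
      obtain ⟨pb, hpb⟩ := hysB
      obtain ⟨pb', hpb'⟩ := hytB
      refine ⟨.cons hys.symm ((pb.reverse.append pb').append (.cons hyt .nil)), ?_⟩
      intro z hz
      simp only [support_cons, List.mem_cons] at hz
      rcases hz with rfl | hz
      · exact .inl rfl
      rw [support_append, support_append] at hz
      rcases List.mem_append.mp hz with hz' | hz'
      · rcases List.mem_append.mp hz' with hz'' | hz''
        · right; right
          rw [support_reverse, List.mem_reverse] at hz''
          exact sideF_support pb hpb z hz''
        · right; right
          exact sideF_support pb' hpb' z (List.Sublist.mem hz'' (List.tail_sublist _))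
      · right; left
        simp only [support_cons, support_nil, List.tail_cons, List.mem_singleton] at hz'
        exact hz'
    -- choose minimal-length connecting walks
    set NA : Set ℕ := {n | ∃ p : G.Walk s t, (∀ z ∈ p.support, z = s ∨ z = t ∨ z ∈ SideF G a T) ∧ p.length = n} with hNA
    set NB : Set ℕ := {n | ∃ p : G.Walk s t, (∀ z ∈ p.support, z = s ∨ z = t ∨ z ∈ SideF G b T) ∧ p.length = n} with hNB
    have hNAne : NA.Nonempty := by
      obtain ⟨p, hp⟩ := hWA
      exact ⟨p.length, p, hp, rfl⟩
    have hNBne : NB.Nonempty := by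
      obtain ⟨p, hp⟩ := hWB
      exact ⟨p.length, p, hp, rfl⟩
    obtain ⟨p0, hp0c, hp0l⟩ := Nat.sInf_mem hNAne
    obtain ⟨q0, hq0c, hq0l⟩ := Nat.sInf_mem hNBne
    set PA := p0.bypass with hPA
    set PB := q0.bypass with hPB
    have hPAc : ∀ z ∈ PA.support, z = s ∨ z = t ∨ z ∈ SideF G a T := fun z hz => hp0c z (support_bypass_subset _ hz)
    have hPBc : ∀ z ∈ PB.support, z = s ∨ z = t ∨ z ∈ SideF G b T := fun z hz => hq0c z (support_bypass_subset _ hz)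
    have hPAl : PA.length = sInf NA := by
      have h1 : PA.length ≤ p0.length := length_bypass_le _
      have h2 : sInf NA ≤ PA.length := Nat.sInf_le ⟨PA, hPAc, rfl⟩
      omega
    have hPBl : PB.length = sInf NB := by
      have h1 : PB.length ≤ q0.length := length_bypass_le _
      have h2 : sInf NB ≤ PB.length := Nat.sInf_le ⟨PB, hPBc, rfl⟩
      omega
    have hPAp : PA.IsPath := bypass_isPath _
    have hPBp : PB.IsPath := bypass_isPath _
    have hlen2 : ∀ (r : G.Walk s t), 2 ≤ r.length := by
      intro r
      rcases Nat.lt_or_ge r.length 2 with hh | hh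
      · interval_cases h : r.length
        · exact absurd (eq_of_length_eq_zero h) hst
        · exact absurd (r.adj_of_mem_edges (edge_of_length_one h)) hnadjst
      · exact hh
    -- build the cycle
    set c : G.Walk s s := PA.append PB.reverse with hc
    have hctail : c.support.tail = PA.support.tail ++ PB.reverse.support.tail := by
      rw [hc, support_append, List.tail_append_of_ne_nil (support_ne_nil PA)]
    have hPAnodup := hPAp.support_nodup
    have hPBrnodup := hPBp.reverse.support_nodup
    have hs_notin_PAtail : s ∉ PA.support.tail := by
      rw [support_eq_cons PA, List.nodup_cons] at hPAnodup
      exact hPAnodup.1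
    have ht_notin_PBrtail : t ∉ PB.reverse.support.tail := by
      rw [support_eq_cons PB.reverse, List.nodup_cons] at hPBrnodup
      exact hPBrnodup.1
    have hmemA : ∀ z ∈ PA.support.tail, z ∈ PA.support :=
      fun z hz => List.Sublist.mem hz (List.tail_sublist _)
    have hmemBr : ∀ z ∈ PB.reverse.support.tail, z ∈ PB.support := by
      intro z hz
      have := List.Sublist.mem hz (List.tail_sublist _)
      rwa [support_reverse, List.mem_reverse] at this
    have hcnd : c.support.tail.Nodup := by
      rw [hctail, List.nodup_append]
      refine ⟨hPAnodup.sublist (List.tail_sublist _),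
        hPBrnodup.sublist (List.tail_sublist _), ?_⟩
      intro z hz1 z2 hz2 hzz2
      subst hzz2
      have hzA := hmemA z hz1
      have hzB := hmemBr z hz2
      have hzs : z ≠ s := fun hh => hs_notin_PAtail (hh ▸ hz1)
      have hzt : z ≠ t := fun hh => ht_notin_PBrtail (hh ▸ hz2)
      rcases hPAc z hzA with hh | hh | hh
      · exact hzs hh
      · exact hzt hh
      rcases hPBc z hzB with hh2 | hh2 | hh2
      · exact hzs hh2
      · exact hzt hh2
      · exact hABdisj z hh hh2
    have hclen : c.length = PA.length + PB.length := by
      rw [hc, length_append, length_reverse]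
    have hccyc : c.IsCycle := by
      refine isCycle_of_tail_nodup ?_ hcnd
      have := hlen2 PA
      have := hlen2 PB
      omega
    obtain ⟨u, w, hu, hw, hadjuw, hecuw⟩ := hch s c hccyc (by
      have := hlen2 PA
      have := hlen2 PB
      omega)
    -- membership decomposition
    have hmemc : ∀ z ∈ c.support, z ∈ PA.support ∨ z ∈ PB.support := by
      intro z hz
      rw [hc, support_append] at hz
      rcases List.mem_append.mp hz with hh | hh
      · exact .inl hh
      · exact .inr (hmemBr z hh)
    have hedgesc : ∀ e', e' ∈ c.edges → e' ∈ PA.edges ∨ e' ∈ PB.edges := by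
      intro e' he'
      rw [hc, edges_append] at he'
      rcases List.mem_append.mp he' with hh | hh
      · exact .inl hh
      · right
        rw [edges_reverse, List.mem_reverse] at hh
        exact hh
    have hecA : s(u, w) ∉ PA.edges := fun hh => hecuw (by rw [hc, edges_append]; simp [hh])
    have hecB : s(u, w) ∉ PB.edges := by
      intro hh
      refine hecuw ?_
      rw [hc, edges_append]
      rw [List.mem_append]
      right
      rw [edges_reverse, List.mem_reverse]
      exact hh
    have huw : u ≠ w := hadjuw.ne
    -- case analysis
    rcases hmemc u hu with huA | huB
    · rcases hmemc w hw with hwA | hwB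
      · -- both on PA: shortcut contradicts minimality
        obtain ⟨q, hql, hqs⟩ := exists_shortcut PA huA hwA huw hadjuw hecA
        have : sInf NA ≤ q.length := Nat.sInf_le ⟨q, fun z hz => hPAc z (hqs z hz), rfl⟩
        omega
      · -- u on PA, w on PB
        by_cases hwA : w ∈ PA.support
        · obtain ⟨q, hql, hqs⟩ := exists_shortcut PA huA hwA huw hadjuw hecA
          have : sInf NA ≤ q.length := Nat.sInf_le ⟨q, fun z hz => hPAc z (hqs z hz), rfl⟩
          omega
        · have hws : w ≠ s := fun hh => hwA (hh ▸ start_mem_support PA)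
          have hwt : w ≠ t := fun hh => hwA (hh ▸ end_mem_support PA)
          have hwSideB : w ∈ SideF G b T := by
            rcases hPBc w hwB with hh | hh | hh
            · exact absurd hh hws
            · exact absurd hh hwt
            · exact hh
          by_cases huB : u ∈ PB.support
          · obtain ⟨q, hql, hqs⟩ := exists_shortcut PB huB hwB huw hadjuw hecB
            have : sInf NB ≤ q.length := Nat.sInf_le ⟨q, fun z hz => hPBc z (hqs z hz), rfl⟩
            omega
          · have hus : u ≠ s := fun hh => huB (hh ▸ start_mem_support PB)
            have hut : u ≠ t := fun hh => huB (hh ▸ end_mem_support PB)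
            have huSideA : u ∈ SideF G a T := by
              rcases hPAc u huA with hh | hh | hh
              · exact absurd hh hus
              · exact absurd hh hut
              · exact hh
            exact hABnoedge u w huSideA hwSideB hadjuw
    · rcases hmemc w hw with hwA | hwB
      · -- u on PB, w on PA : symmetric
        by_cases huA : u ∈ PA.support
        · obtain ⟨q, hql, hqs⟩ := exists_shortcut PA huA hwA huw hadjuw hecA
          have : sInf NA ≤ q.length := Nat.sInf_le ⟨q, fun z hz => hPAc z (hqs z hz), rfl⟩
          omega
        · have hus : u ≠ s := fun hh => huA (hh ▸ start_mem_support PA)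
          have hut : u ≠ t := fun hh => huA (hh ▸ end_mem_support PA)
          have huSideB : u ∈ SideF G b T := by
            rcases hPBc u huB with hh | hh | hh
            · exact absurd hh hus
            · exact absurd hh hut
            · exact hh
          by_cases hwB : w ∈ PB.support
          · obtain ⟨q, hql, hqs⟩ := exists_shortcut PB huB hwB huw hadjuw hecB
            have : sInf NB ≤ q.length := Nat.sInf_le ⟨q, fun z hz => hPBc z (hqs z hz), rfl⟩
            omega
          · have hws : w ≠ s := fun hh => hwB (hh ▸ start_mem_support PB)
            have hwt : w ≠ t := fun hh => hwB (hh ▸ end_mem_support PB)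
            have hwSideA : w ∈ SideF G a T := by
              rcases hPAc w hwA with hh | hh | hh
              · exact absurd hh hws
              · exact absurd hh hwt
              · exact hh
            exact hABnoedge w u hwSideA huSideB hadjuw.symm
      · -- both on PB
        obtain ⟨q, hql, hqs⟩ := exists_shortcut PB huB hwB huw hadjuw hecB
        have : sInf NB ≤ q.length := Nat.sInf_le ⟨q, fun z hz => hPBc z (hqs z hz), rfl⟩
        omega
  exact ⟨T, haT, hbT, hsepT, hclique, nbrA, nbrB⟩

lemma chordal_induce (hch : IsChordal G) (s : Set V) : IsChordal (G.induce s) := by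
  intro v c hc hlen
  have hinj : Function.Injective (SimpleGraph.Embedding.induce s (G := G)).toHom := by
    intro u w h
    exact Subtype.ext h
  set c' := c.map (SimpleGraph.Embedding.induce s (G := G)).toHom with hc'
  have hc'cyc : c'.IsCycle := (map_isCycle_iff_of_injective hinj).mpr hc
  have hc'len : 4 ≤ c'.length := by rwa [hc', length_map]
  obtain ⟨u, w, hu, hw, hadj, hec⟩ := hch _ c' hc'cyc hc'len
  rw [hc', Walk.support_map, List.mem_map] at hu hw
  obtain ⟨u0, hu0, rfl⟩ := hu
  obtain ⟨w0, hw0, rfl⟩ := hw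
  refine ⟨u0, w0, hu0, hw0, hadj, ?_⟩
  intro hh
  refine hec ?_
  rw [hc', Walk.edges_map, List.mem_map]
  exact ⟨s(u0, w0), hh, rfl⟩

lemma induce_adj' {s : Set V} {u w : ↥s} : (G.induce s).Adj u w ↔ G.Adj u.val w.val :=
  Iff.rfl

/-- Dirac: a chordal graph is complete or has two nonadjacent simplicial vertices. -/
theorem dirac_aux : ∀ (n : ℕ) {V : Type} [Fintype V] (G : SimpleGraph V),
    Fintype.card V ≤ n → IsChordal G →
    (∀ u w : V, u ≠ w → G.Adj u w) ∨
    (∃ v w : V, v ≠ w ∧ ¬G.Adj v w ∧ Simp G v ∧ Simp G w) := by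
  intro n
  induction n with
  | zero =>
    intro V _ G hcard hch
    left
    intro u w _
    exact absurd (Fintype.card_pos_iff.mpr ⟨u⟩) (by omega)
  | succ n IH =>
    intro V _ G hcard hch
    classical
    by_cases hcomp : ∀ u w : V, u ≠ w → G.Adj u w
    · exact .inl hcomp
    right
    push_neg at hcomp
    obtain ⟨a, b, hab, hnadj⟩ := hcomp
    obtain ⟨T, haT, hbT, hsepT, hclique, -, -⟩ := clique_sep hch hab hnadj
    have key : ∀ (r w0 : V), r ∉ T → w0 ∉ SideF G r T → w0 ∉ (T : Set V) →
        ∃ v, v ∈ SideF G r T ∧ Simp G v := by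
      intro r w0 hrT hw0A hw0T
      set s : Set V := SideF G r T ∪ (T : Set V) with hs
      have hrs : r ∈ s := .inl (mem_sideF_self hrT)
      have hw0s : w0 ∉ s := by
        intro hh
        rcases hh with hh | hh
        · exact hw0A hh
        · exact hw0T hh
      have hclosed : ∀ x, x ∈ SideF G r T → ∀ y, G.Adj x y → y ∈ s := by
        intro x hx y hadj
        by_cases hyT : y ∈ T
        · exact .inr hyT
        · exact .inl (sideF_closed hx hadj hyT)
      haveI : Fintype ↥s := Fintype.ofFinite ↥s
      have hcards : Fintype.card ↥s < Fintype.card V := by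
        refine Fintype.card_lt_of_injective_of_notMem Subtype.val Subtype.val_injective
          (b := w0) ?_
        rw [Subtype.range_val]
        exact hw0s
      rcases IH (G.induce s) (by omega) (chordal_induce hch s) with hfull | ⟨v, w, hvw, hnadjvw, hSv, hSw⟩
      · -- induced graph complete: r itself is simplicial
        refine ⟨r, mem_sideF_self hrT, ?_⟩
        intro x y hx hy hxy
        have hxs : x ∈ s := hclosed r (mem_sideF_self hrT) x hx
        have hys : y ∈ s := hclosed r (mem_sideF_self hrT) y hy
        have h3 : (⟨x, hxs⟩ : ↥s) ≠ ⟨y, hys⟩ := fun hh => hxy (Subtype.mk_eq_mk.mp hh)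
        exact (induce_adj' (s := s)).mp (hfull ⟨x, hxs⟩ ⟨y, hys⟩ h3)
      · -- two nonadjacent simplicial vertices in the induced graph
        have hone : v.val ∈ SideF G r T ∨ w.val ∈ SideF G r T := by
          rcases v.prop with hh | hh
          · exact .inl hh
          rcases w.prop with hh2 | hh2
          · exact .inr hh2
          · exfalso
            refine hnadjvw ((induce_adj' (s := s)).mpr ?_)
            exact hclique v.val hh w.val hh2 (fun heq => hvw (Subtype.ext heq))
        have main : ∀ (v' : ↥s), v'.val ∈ SideF G r T → Simp (G.induce s) v' →
            ∃ u, u ∈ SideF G r T ∧ Simp G u := by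
          intro v' hv' hSv'
          refine ⟨v'.val, hv', ?_⟩
          intro x y hx hy hxy
          have hxs : x ∈ s := hclosed v'.val hv' x hx
          have hys : y ∈ s := hclosed v'.val hv' y hy
          have h1 : (G.induce s).Adj v' ⟨x, hxs⟩ := (induce_adj' (s := s)).mpr hx
          have h2 : (G.induce s).Adj v' ⟨y, hys⟩ := (induce_adj' (s := s)).mpr hy
          have h3 : (⟨x, hxs⟩ : ↥s) ≠ ⟨y, hys⟩ := fun hh => hxy (Subtype.mk_eq_mk.mp hh)
          exact (induce_adj' (s := s)).mp (hSv' h1 h2 h3)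
        rcases hone with hh | hh
        · exact main v hh hSv
        · exact main w hh hSw
    -- b is not on a's side and vice versa
    have hbA : b ∉ SideF G a T := by
      rintro ⟨p, hp⟩
      obtain ⟨z, hz, hzT⟩ := hsepT p
      exact hp z hz hzT
    have haB : a ∉ SideF G b T := by
      rintro ⟨p, hp⟩
      obtain ⟨z, hz, hzT⟩ := hsepT p.reverse
      rw [support_reverse, List.mem_reverse] at hz
      exact hp z hz hzT
    obtain ⟨vA, hvA, hSvA⟩ := key a b haT hbA (fun hh => hbT hh)
    obtain ⟨vB, hvB, hSvB⟩ := key b a hbT haB (fun hh => haT hh)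
    have hdisjAB : ∀ x, x ∈ SideF G a T → x ∉ SideF G b T := by
      intro x hxa hxb
      obtain ⟨p, hp⟩ := sideF_compose hxa hxb
      obtain ⟨z, hz, hzT⟩ := hsepT p
      exact hp z hz hzT
    refine ⟨vA, vB, ?_, ?_, hSvA, hSvB⟩
    · intro hh
      exact hdisjAB vA hvA (hh ▸ hvB)
    · intro hadj
      exact hdisjAB vB (sideF_closed hvA hadj (sideF_not_mem hvB)) hvB

lemma lift_walk {s : Set V} : ∀ {x y : V} (q : G.Walk x y) (hx : x ∈ s) (hy : y ∈ s),
    (∀ z ∈ q.support, z ∈ s) →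
    ∃ q' : (G.induce s).Walk ⟨x, hx⟩ ⟨y, hy⟩, ∀ z ∈ q'.support, z.val ∈ q.support := by
  intro x y q
  induction q with
  | nil =>
    intro hx hy _
    exact ⟨.nil, by simp⟩
  | @cons x w y h rest ih =>
    intro hx hy hq
    have hw : w ∈ s := hq w (by simp)
    obtain ⟨q', hq'⟩ := ih hw hy (fun z hz => hq z (by simp [hz]))
    refine ⟨.cons ((induce_adj' (s := s)).mpr h) q', ?_⟩
    intro z hz
    simp only [support_cons, List.mem_cons] at hz ⊢
    rcases hz with rfl | hz
    · exact .inl rfl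
    · exact .inr (hq' z hz)

/-- Helly property: in a chordal graph, a family of pairwise touching connected sets
is met by a single clique. -/
theorem helly : ∀ (n : ℕ) {V : Type} [Fintype V] (G : SimpleGraph V), Fintype.card V ≤ n →
    IsChordal G → ∀ (F : Set (Set V)),
    (∀ X ∈ F, X.Nonempty) →
    (∀ X ∈ F, ∀ x ∈ X, ∀ y ∈ X, ∃ p : G.Walk x y, ∀ z ∈ p.support, z ∈ X) →
    (∀ X ∈ F, ∀ Y ∈ F, (∃ x, x ∈ X ∧ x ∈ Y) ∨ (∃ x ∈ X, ∃ y ∈ Y, G.Adj x y)) →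
    ∃ K : Set V, G.IsClique K ∧ ∀ X ∈ F, ∃ x ∈ K, x ∈ X := by
  intro n
  induction n with
  | zero =>
    intro V _ G hcard hch F hne hconn htouch
    refine ⟨∅, by simp [SimpleGraph.isClique_iff, Set.Pairwise], ?_⟩
    intro X hX
    obtain ⟨x, -⟩ := hne X hX
    exact absurd (Fintype.card_pos_iff.mpr ⟨x⟩) (by omega)
  | succ n IH =>
    intro V _ G hcard hch F hne hconn htouch
    classical
    rcases isEmpty_or_nonempty V with hV | hV
    · refine ⟨∅, by simp [SimpleGraph.isClique_iff, Set.Pairwise], ?_⟩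
      intro X hX
      obtain ⟨x, -⟩ := hne X hX
      exact hV.elim x
    -- get a simplicial vertex
    have hsimp : ∃ v : V, Simp G v := by
      rcases dirac_aux (n + 1) G hcard hch with hfull | ⟨v, -, -, -, hSv, -⟩
      · obtain ⟨v0⟩ := hV
        exact ⟨v0, fun a b h1 h2 hne' => hfull a b hne'⟩
      · exact ⟨v, hSv⟩
    obtain ⟨v, hSv⟩ := hsimp
    -- neighbour extraction
    have nbr_in : ∀ X ∈ F, v ∈ X → X ≠ {v} → ∃ x1, x1 ∈ X ∧ G.Adj v x1 := by
      intro X hX hvX hXne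
      have : ∃ u, u ∈ X ∧ u ≠ v := by
        by_contra hcon
        push_neg at hcon
        refine hXne ?_
        ext z
        constructor
        · intro hz; exact hcon z hz
        · intro hz; simp only [Set.mem_singleton_iff] at hz; exact hz ▸ hvX
      obtain ⟨u, huX, huv⟩ := this
      obtain ⟨p, hp⟩ := hconn X hX v hvX u huX
      cases p with
      | nil => exact absurd rfl huv
      | @cons _ w _ h rest =>
        exact ⟨w, hp w (by simp), h⟩
    by_cases hsingle : ∃ X ∈ F, X = {v}
    · -- the closed neighbourhood of v is a clique meeting everything
      obtain ⟨X0, hX0, hX0v⟩ := hsingle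
      refine ⟨{v} ∪ {w | G.Adj v w}, ?_, ?_⟩
      · rw [SimpleGraph.isClique_iff]
        intro x hx y hy hxy
        rcases hx with hx | hx
        · rcases hy with hy | hy
          · exact absurd (hx.trans hy.symm) hxy
          · exact hx ▸ hy
        · rcases hy with hy | hy
          · exact (hy ▸ hx).symm
          · exact hSv hx hy hxy
      · intro Y hY
        rcases htouch X0 hX0 Y hY with ⟨x, hx1, hx2⟩ | ⟨x, hx1, y, hy1, hadj⟩
        · rw [hX0v] at hx1
          simp only [Set.mem_singleton_iff] at hx1
          exact ⟨v, .inl rfl, hx1 ▸ hx2⟩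
        · rw [hX0v] at hx1
          simp only [Set.mem_singleton_iff] at hx1
          subst hx1
          exact ⟨y, .inr hadj, hy1⟩
    · -- recurse on G - v
      push_neg at hsingle
      set s : Set V := {v}ᶜ with hs
      haveI : Fintype ↥s := Fintype.ofFinite ↥s
      have hcards : Fintype.card ↥s < Fintype.card V := by
        refine Fintype.card_lt_of_injective_of_notMem Subtype.val Subtype.val_injective
          (b := v) ?_
        rw [Subtype.range_val]
        simp [hs]
      set F' : Set (Set ↥s) := (fun X => Subtype.val ⁻¹' X) '' F with hF'
      -- nonemptiness
      have hne' : ∀ X' ∈ F', X'.Nonempty := by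
        rintro X' ⟨X, hX, rfl⟩
        have : ∃ u, u ∈ X ∧ u ≠ v := by
          by_contra hcon
          push_neg at hcon
          obtain ⟨u, hu⟩ := hne X hX
          refine hsingle X hX ?_
          ext z
          constructor
          · intro hz; exact hcon z hz
          · intro hz
            simp only [Set.mem_singleton_iff] at hz
            exact hz ▸ ((hcon u hu) ▸ hu)
        obtain ⟨u, huX, huv⟩ := this
        exact ⟨⟨u, by simp [hs, huv]⟩, huX⟩
      -- connectivity
      have hconn' : ∀ X' ∈ F', ∀ x ∈ X', ∀ y ∈ X',
          ∃ p : (G.induce s).Walk x y, ∀ z ∈ p.support, z ∈ X' := by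
        rintro X' ⟨X, hX, rfl⟩ x hx y hy
        obtain ⟨p, hp⟩ := hconn X hX x.val hx y.val hy
        have hxv : x.val ≠ v := by
          intro hh
          have h0 : x.val ∈ ({v}ᶜ : Set V) := x.prop
          exact h0 (Set.mem_singleton_iff.mpr hh)
        have hyv : y.val ≠ v := by
          intro hh
          have h0 : y.val ∈ ({v}ᶜ : Set V) := y.prop
          exact h0 (Set.mem_singleton_iff.mpr hh)
        obtain ⟨q, hqs, hqv⟩ := walk_avoid_simplicial hSv p.length p le_rfl hxv hyv
        have hqin : ∀ z ∈ q.support, z ∈ s := by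
          intro z hz
          simp only [hs, Set.mem_compl_iff, Set.mem_singleton_iff]
          intro hzv
          exact hqv (hzv ▸ hz)
        obtain ⟨q'', hq''⟩ := lift_walk q x.prop y.prop hqin
        refine ⟨q'', ?_⟩
        intro z hz
        exact hp z.val (hqs z.val (hq'' z hz))
      -- touching
      have htouch' : ∀ X' ∈ F', ∀ Y' ∈ F',
          (∃ x, x ∈ X' ∧ x ∈ Y') ∨ (∃ x ∈ X', ∃ y ∈ Y', (G.induce s).Adj x y) := by
        rintro X' ⟨X, hX, rfl⟩ Y' ⟨Y, hY, rfl⟩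
        have hmk : ∀ (w : V), w ≠ v → w ∈ s := by
          intro w hw
          simp [hs, hw]
        rcases htouch X hX Y hY with ⟨x, hx1, hx2⟩ | ⟨x, hx1, y, hy1, hadj⟩
        · by_cases hxv : x = v
          · rw [hxv] at hx1 hx2
            obtain ⟨x1, hx1X, hadj1⟩ := nbr_in X hX hx1 (hsingle X hX)
            obtain ⟨y1, hy1Y, hadj2⟩ := nbr_in Y hY hx2 (hsingle Y hY)
            by_cases hxy1 : x1 = y1
            · exact .inl ⟨⟨x1, hmk x1 hadj1.ne'⟩, hx1X, hxy1 ▸ hy1Y⟩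
            · refine .inr ⟨⟨x1, hmk x1 hadj1.ne'⟩, hx1X, ⟨y1, hmk y1 hadj2.ne'⟩, hy1Y, ?_⟩
              exact (induce_adj' (s := s)).mpr (hSv hadj1 hadj2 hxy1)
          · exact .inl ⟨⟨x, hmk x hxv⟩, hx1, hx2⟩
        · by_cases hxv : x = v
          · rw [hxv] at hx1 hadj
            have hyv : y ≠ v := fun hh => G.irrefl (hh ▸ hadj)
            obtain ⟨x1, hx1X, hadj1⟩ := nbr_in X hX hx1 (hsingle X hX)
            by_cases hxy1 : x1 = y
            · exact .inl ⟨⟨y, hmk y hyv⟩, hxy1 ▸ hx1X, hy1⟩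
            · refine .inr ⟨⟨x1, hmk x1 hadj1.ne'⟩, hx1X, ⟨y, hmk y hyv⟩, hy1, ?_⟩
              exact (induce_adj' (s := s)).mpr (hSv hadj1 hadj hxy1)
          · by_cases hyv : y = v
            · rw [hyv] at hy1 hadj
              have hxv' : x ≠ v := fun hh => G.irrefl (hh ▸ hadj)
              obtain ⟨y1, hy1Y, hadj2⟩ := nbr_in Y hY hy1 (hsingle Y hY)
              by_cases hxy1 : x = y1
              · exact .inl ⟨⟨x, hmk x hxv'⟩, hx1, hxy1 ▸ hy1Y⟩
              · refine .inr ⟨⟨x, hmk x hxv'⟩, hx1, ⟨y1, hmk y1 hadj2.ne'⟩, hy1Y, ?_⟩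
                exact (induce_adj' (s := s)).mpr (hSv hadj.symm hadj2 hxy1)
            · exact .inr ⟨⟨x, hmk x hxv⟩, hx1, ⟨y, hmk y hyv⟩, hy1,
                (induce_adj' (s := s)).mpr hadj⟩
      obtain ⟨K', hK'c, hK'hit⟩ := IH (G.induce s) (by omega) (chordal_induce hch s)
        F' hne' hconn' htouch'
      refine ⟨Subtype.val '' K', ?_, ?_⟩
      · rw [SimpleGraph.isClique_iff]
        rintro x ⟨x', hx', rfl⟩ y ⟨y', hy', rfl⟩ hxy
        rw [SimpleGraph.isClique_iff] at hK'c
        exact (induce_adj' (s := s)).mp (hK'c hx' hy' (fun hh => hxy (congrArg Subtype.val hh)))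
      · intro X hX
        obtain ⟨x', hx'K, hx'X⟩ := hK'hit (Subtype.val ⁻¹' X) ⟨X, hX, rfl⟩
        exact ⟨x'.val, ⟨x', hx'K, rfl⟩, hx'X⟩

/-- Any two longest cycles in a 2-connected graph share a vertex. -/
lemma longest_cycles_meet [Fintype V]
    (hconn : ∀ v : V, ((⊤ : G.Subgraph).deleteVerts {v}).coe.Connected)
    {u u' : V} {c : G.Walk u u} {c' : G.Walk u' u'}
    (hc : IsLongestCycle G c) (hc' : IsLongestCycle G c') :
    ∃ z, z ∈ c.support ∧ z ∈ c'.support := by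
  classical
  by_contra hdisj
  push_neg at hdisj
  set A : Set V := {z | z ∈ c.support} with hA
  set B : Set V := {z | z ∈ c'.support} with hB
  have hAB : ∀ z, z ∈ A → z ∉ B := fun z hz hz' => hdisj z hz hz'
  -- a cycle has two distinct vertices on its support
  have htwo : ∀ {w : V} (d : G.Walk w w), d.IsCycle → ∃ x, x ∈ d.support ∧ x ≠ w := by
    intro w d hd
    cases d with
    | nil => exact absurd hd.three_le_length (by simp)
    | @cons _ x _ h q => exact ⟨x, by simp [start_mem_support], fun hh => G.irrefl (hh ▸ h)⟩
  -- the Menger hypothesis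
  have hyp : ∀ z' : V, ∃ (a b : V), a ∈ A ∧ b ∈ B ∧ ∃ p : G.Walk a b, z' ∉ p.support := by
    intro z'
    obtain ⟨x, hx, hxu⟩ := htwo c hc.1
    obtain ⟨y, hy, hyu⟩ := htwo c' hc'.1
    have ha : ∃ a, a ∈ A ∧ a ≠ z' := by
      by_cases hu : u = z'
      · exact ⟨x, hx, fun hh => hxu (hh.trans hu.symm)⟩
      · exact ⟨u, start_mem_support c, hu⟩
    have hb : ∃ b, b ∈ B ∧ b ≠ z' := by
      by_cases hu : u' = z'
      · exact ⟨y, hy, fun hh => hyu (hh.trans hu.symm)⟩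
      · exact ⟨u', start_mem_support c', hu⟩
    obtain ⟨a, haA, haz⟩ := ha
    obtain ⟨b, hbB, hbz⟩ := hb
    have hav : a ∈ ((⊤ : G.Subgraph).deleteVerts {z'}).verts := by
      simp [SimpleGraph.Subgraph.deleteVerts_verts, haz]
    have hbv : b ∈ ((⊤ : G.Subgraph).deleteVerts {z'}).verts := by
      simp [SimpleGraph.Subgraph.deleteVerts_verts, hbz]
    obtain ⟨W0⟩ := (hconn z').preconnected ⟨a, hav⟩ ⟨b, hbv⟩
    refine ⟨a, b, haA, hbB, W0.map (SimpleGraph.Subgraph.hom _), ?_⟩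
    intro hz
    have hz := (show z' ∈ W0.support.map (SimpleGraph.Subgraph.hom _) by
      rw [← Walk.support_map]; exact hz)
    rw [List.mem_map] at hz
    obtain ⟨⟨w0, hw0⟩, -, hw0e⟩ := hz
    simp only [SimpleGraph.Subgraph.deleteVerts_verts, Set.mem_diff,
      Set.mem_singleton_iff] at hw0
    exact hw0.2 hw0e
  -- apply Menger
  have hVne : Nonempty V := ⟨u⟩
  obtain ⟨a1, b1, a2, b2, ha1, hb1, ha2, hb2, q1, q2, hq12⟩ :=
    menger2 u G.edgeSet.ncard G A B le_rfl hyp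
  -- make them paths and trim
  obtain ⟨a1', b1', r1, ha1', hb1', hr1sub, hr1A, hr1B⟩ :=
    trimWalk hAB q1.bypass ha1 hb1
  obtain ⟨a2', b2', r2, ha2', hb2', hr2sub, hr2A, hr2B⟩ :=
    trimWalk hAB q2.bypass ha2 hb2
  set p1 := r1.bypass with hp1
  set p2 := r2.bypass with hp2
  have hp1sub : ∀ z ∈ p1.support, z ∈ q1.support := fun z hz =>
    support_bypass_subset _ (hr1sub z (support_bypass_subset _ hz))
  have hp2sub : ∀ z ∈ p2.support, z ∈ q2.support := fun z hz =>
    support_bypass_subset _ (hr2sub z (support_bypass_subset _ hz))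
  have hlen : c.length ≤ c'.length := hc'.2 u c hc.1
  refine surgery hc.1 hc'.1 (fun w d hd => hc.2 w d hd) hlen hAB p1 p2 ha1' ha2'
    hb1' hb2' (bypass_isPath _) (bypass_isPath _) ?_ ?_ ?_ ?_ ?_
  · exact fun z hz hz2 => hq12 z (hp1sub z hz) (hp2sub z hz2)
  · exact fun z hz hne => hr1A z (support_bypass_subset _ hz) hne
  · exact fun z hz hne => hr1B z (support_bypass_subset _ hz) hne
  · exact fun z hz hne => hr2A z (support_bypass_subset _ hz) hne
  · exact fun z hz hne => hr2B z (support_bypass_subset _ hz) hne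

theorem stmt_7 {V : Type} [Fintype V] (G : SimpleGraph V) (hG : TwoConnected G)
    (hch : IsChordal G) :
    ∃ S : Finset V, IsLCTransversal G S ∧ S.card ≤ G.cliqueNum := by
  classical
  obtain ⟨hcard3, hconn⟩ := hG
  set F : Set (Set V) :=
    {X | ∃ (v : V) (c : G.Walk v v), IsLongestCycle G c ∧ X = {z | z ∈ c.support}} with hF
  have hne : ∀ X ∈ F, X.Nonempty := by
    rintro X ⟨v, c, hc, rfl⟩
    exact ⟨v, start_mem_support c⟩
  have hconn' : ∀ X ∈ F, ∀ x ∈ X, ∀ y ∈ X,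
      ∃ p : G.Walk x y, ∀ z ∈ p.support, z ∈ X := by
    rintro X ⟨v, c, hc, rfl⟩ x hx y hy
    have hx' : x ∈ c.support := hx
    have hy' : y ∈ (c.rotate _ hx').support := (mem_support_rotate c hx').mpr hy
    refine ⟨(c.rotate _ hx').takeUntil y hy', ?_⟩
    intro z hz
    exact (mem_support_rotate c hx').mp (support_takeUntil_subset _ hy' hz)
  have htouch : ∀ X ∈ F, ∀ Y ∈ F,
      (∃ x, x ∈ X ∧ x ∈ Y) ∨ (∃ x ∈ X, ∃ y ∈ Y, G.Adj x y) := by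
    rintro X ⟨v, c, hc, rfl⟩ Y ⟨v', c', hc', rfl⟩
    exact .inl (longest_cycles_meet hconn hc hc')
  obtain ⟨K, hKc, hKhit⟩ := helly (Fintype.card V) G le_rfl hch F hne hconn' htouch
  have hKfin : K.Finite := Set.toFinite K
  refine ⟨hKfin.toFinset, ?_, ?_⟩
  · intro v c hc
    obtain ⟨x, hxK, hxX⟩ := hKhit {z | z ∈ c.support} ⟨v, c, hc, rfl⟩
    exact ⟨x, hKfin.mem_toFinset.mpr hxK, hxX⟩
  · have hKc' : G.IsClique (hKfin.toFinset : Set V) := by rwa [Set.Finite.coe_toFinset]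
    exact SimpleGraph.IsClique.card_le_cliqueNum (tc := hKc')
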